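/- Let G be an ℵ0-saturated group. Then either G contains a free subgroup of rank 2, or G satisfies a nontrivial identity in two variables. In the latter case, either G contains a free subsemigroup of rank 2, or G satisfies a finite disjunction of nontrivial positive identities in two variables, i.e. there are finitely many pairs (t_1, s_1), …, (t_k, s_k) of distinct words in the free semigroup on {x, y} (allowing the empty word) such that for all g, h in G one has t_i(g, h) = s_i(g, h) for some i. -/

import Mathlib

open FirstOrder

/-- The first-order language of groups: one constant (the identity), one unary function
symbol (inversion), one binary function symbol (multiplication) and no relation symbols. -/
def GroupLang : FirstOrder.Language where
  Functions := fun n =>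
    match n with
    | 0 => Unit
    | 1 => Unit
    | 2 => Unit
    | _ => Empty
  Relations := fun _ => Empty

/-- Every group is a structure for the language of groups in the natural way. -/
instance groupLangStructure (G : Type*) [Group G] : GroupLang.Structure G where
  funMap := fun {n} f x =>
    match n, f, x with
    | 0, _, _ => 1
    | 1, _, x => (x 0)⁻¹
    | 2, _, x => x 0 * x 1
  RelMap := fun {n} r _ => r.elim

/-- A group is ℵ₀-saturated if every countable set of first-order formulas in one free
variable, with finitely many parameters from the group, which is finitely satisfiable in
the group is realized in the group. -/
def AlephZeroSaturated (G : Type*) [Group G] : Prop :=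
  ∀ (k : ℕ) (c : Fin k → G) (p : ℕ → GroupLang.Formula (Fin k ⊕ Fin 1)),
    (∀ s : Finset ℕ, ∃ g : G, ∀ n ∈ s, (p n).Realize (Sum.elim c fun _ => g)) →
    ∃ g : G, ∀ n : ℕ, (p n).Realize (Sum.elim c fun _ => g)

/-- A group contains a free subgroup of rank 2 if there is an injective homomorphism from
the free group on two generators into it. -/
def ContainsFreeGroupRank2 (G : Type*) [Group G] : Prop :=
  ∃ f : FreeGroup Bool →* G, Function.Injective f

/-- Evaluation of a positive word (a list over a two-letter alphabet) at a pair of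
group elements. -/
def posWordEval {G : Type*} [Group G] (a b : G) (w : List Bool) : G :=
  (w.map fun x => if x then a else b).prod

/-- A group contains a free subsemigroup of rank 2 if there are two elements at which
distinct nonempty positive words evaluate to distinct elements. -/
def ContainsFreeSubsemigroupRank2 (G : Type*) [Group G] : Prop :=
  ∃ a b : G, ∀ w₁ w₂ : List Bool, w₁ ≠ [] → w₂ ≠ [] → w₁ ≠ w₂ →
    posWordEval a b w₁ ≠ posWordEval a b w₂

/-- A group satisfies a nontrivial identity (in two variables) if some nontrivial reduced
word in the free group on two generators vanishes identically on the group. -/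
def SatisfiesNontrivialIdentity (G : Type*) [Group G] : Prop :=
  ∃ w : FreeGroup Bool, w ≠ 1 ∧
    ∀ a b : G, FreeGroup.lift (fun x => if x then a else b) w = 1

namespace AlephAux

open FreeGroup List

variable {α : Type*} [DecidableEq α]

/-- Two adjacent letters that do not cancel. -/
def NoCan (c d : α × Bool) : Prop := ¬(c.1 = d.1 ∧ c.2 = !d.2)

lemma noCan_of_fst_ne {c d : α × Bool} (h : c.1 ≠ d.1) : NoCan c d := fun hh => h hh.1

lemma reduce_eq_self_of_chain' : ∀ {L : List (α × Bool)}, List.Chain' NoCan L → reduce L = L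
  | [], _ => rfl
  | c :: L, h => by
    obtain ⟨h1, h2⟩ := List.isChain_cons.1 h
    rw [FreeGroup.reduce.cons, reduce_eq_self_of_chain' h2]
    cases L with
    | nil => rfl
    | cons d L' =>
      have hnc : ¬(c.1 = d.1 ∧ c.2 = !d.2) := h1 d rfl
      simp only [if_neg hnc]

lemma length_reduce_le (L : List (α × Bool)) : (reduce L).length ≤ L.length := by
  obtain ⟨n, hn⟩ := FreeGroup.Red.length (FreeGroup.reduce.red (L := L))
  omega

lemma chain'_of_reduce_eq_self : ∀ {L : List (α × Bool)}, reduce L = L → List.Chain' NoCan L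
  | [], _ => List.isChain_nil
  | c :: L, h => by
    rw [FreeGroup.reduce.cons] at h
    rcases hL : reduce L with _ | ⟨d, t⟩
    · rw [hL] at h
      dsimp only at h
      have : L = [] := by simpa using h.symm
      subst this
      exact List.isChain_singleton _
    · rw [hL] at h
      dsimp only at h
      by_cases hc : c.1 = d.1 ∧ c.2 = !d.2
      · rw [if_pos hc] at h
        exfalso
        have h1 : (reduce L).length ≤ L.length := length_reduce_le L
        rw [hL] at h1
        have := congrArg List.length h
        simp at this h1
        omega
      · rw [if_neg hc] at h
        have hL' : L = d :: t := by
          have := congrArg List.tail h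
          simpa using this.symm
        have hred : reduce L = L := by rw [hL, hL']
        have := chain'_of_reduce_eq_self hred
        rw [hL']
        exact List.isChain_cons.2 ⟨fun y hy => by simp at hy; subst hy; exact hc, by rwa [hL'] at this⟩

lemma chain'_iff_reduce {L : List (α × Bool)} : List.Chain' NoCan L ↔ reduce L = L :=
  ⟨reduce_eq_self_of_chain', chain'_of_reduce_eq_self⟩

lemma reduce_append (L₁ L₂ : List (α × Bool)) :
    reduce (L₁ ++ L₂) = reduce (L₁ ++ reduce L₂) := by
  induction L₁ with
  | nil => simp [FreeGroup.reduce.idem]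
  | cons c L₁ ih => rw [List.cons_append, FreeGroup.reduce.cons, ih, ← FreeGroup.reduce.cons,
      ← List.cons_append]

lemma chain'_replicate_self (k : ℕ) (c : α × Bool) : List.Chain' NoCan (List.replicate k c) := by
  induction k with
  | zero => exact List.isChain_nil
  | succ k ih =>
    rw [List.replicate_succ]
    refine List.isChain_cons.2 ⟨fun y hy => ?_, ih⟩
    have : y = c := by
      have := List.mem_of_mem_head? hy
      exact List.eq_of_mem_replicate this
    subst this
    intro hh
    simp at hh

/-- reduce commutes with an injective relabelling of letters. -/
lemma reduce_map {β : Type*} [DecidableEq β] {f : α → β} (hf : Function.Injective f) :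
    ∀ L : List (α × Bool),
      reduce (L.map fun c => (f c.1, c.2)) = (reduce L).map fun c => (f c.1, c.2)
  | [] => rfl
  | c :: L => by
    rw [List.map_cons, FreeGroup.reduce.cons, FreeGroup.reduce.cons, reduce_map hf L]
    cases hL : reduce L with
    | nil => rfl
    | cons d t =>
      simp only [List.map_cons]
      by_cases h : c.1 = d.1 ∧ c.2 = !d.2
      · rw [if_pos ⟨congrArg f h.1, h.2⟩, if_pos h]
      · rw [if_neg ?_, if_neg h]
        · rfl
        · rintro ⟨h1, h2⟩; exact h ⟨hf h1, h2⟩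

lemma mem_invRev {L : List (α × Bool)} {c : α × Bool} :
    c ∈ invRev L → ∃ d ∈ L, c.1 = d.1 := by
  intro hc
  simp only [FreeGroup.invRev, List.mem_reverse, List.mem_map] at hc
  obtain ⟨d, hd, rfl⟩ := hc
  exact ⟨d, hd, rfl⟩

lemma chain'_invRev {L : List (α × Bool)} (h : reduce L = L) :
    List.Chain' NoCan (invRev L) :=
  chain'_of_reduce_eq_self (by rw [FreeGroup.reduce_invRev, h])

lemma invRev_ne_nil {L : List (α × Bool)} (h : L ≠ []) : invRev L ≠ [] := by
  intro hh
  apply h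
  have := congrArg List.length hh
  rw [FreeGroup.invRev_length] at this
  exact List.length_eq_zero_iff.1 this

/-- helper: gluing chains when the junction letters have distinct bases -/
lemma chain'_glue {L₁ L₂ : List (α × Bool)} (h₁ : List.Chain' NoCan L₁)
    (h₂ : List.Chain' NoCan L₂)
    (hj : ∀ x ∈ L₁.getLast?, ∀ y ∈ L₂.head?, x.1 ≠ y.1) :
    List.Chain' NoCan (L₁ ++ L₂) :=
  List.isChain_append.2 ⟨h₁, h₂, fun x hx y hy => noCan_of_fst_ne (hj x hx y hy)⟩

lemma chain'_cons_ne {z : α × Bool} {L : List (α × Bool)} (h : List.Chain' NoCan L)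
    (hj : ∀ y ∈ L.head?, z.1 ≠ y.1) : List.Chain' NoCan (z :: L) :=
  List.isChain_cons.2 ⟨fun y hy => noCan_of_fst_ne (hj y hy), h⟩

lemma head?_mem_append {L R : List (α × Bool)} (hL : L ≠ []) {y : α × Bool}
    (hy : y ∈ (L ++ R).head?) : y ∈ L := by
  obtain ⟨c, t, rfl⟩ := List.exists_cons_of_ne_nil hL
  simp at hy
  subst hy
  simp


open FreeGroup List

/-- the letter `x` -/
abbrev lX : Bool × Bool := (true, true)
/-- the letter `x⁻¹` -/
abbrev lXi : Bool × Bool := (true, false)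

/-- the word `x^k yᵉ` -/
def XP (k : ℕ) (ε : Bool) : List (Bool × Bool) := List.replicate k lX ++ [(false, ε)]

/-- the element `x^k yᵉ x⁻ᵏ` of the free group on two generators -/
def Tk (k : ℕ) (ε : Bool) : FreeGroup Bool :=
  FreeGroup.mk (XP k ε ++ List.replicate k lXi)

lemma mk_replicate_X (k : ℕ) : FreeGroup.mk (List.replicate k lX) = FreeGroup.of true ^ k := by
  have := FreeGroup.toWord_of_pow (α := Bool) true k
  rw [← this, FreeGroup.mk_toWord]

lemma mk_replicate_Xi (k : ℕ) :
    FreeGroup.mk (List.replicate k lXi) = (FreeGroup.of true ^ k)⁻¹ := by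
  rw [← mk_replicate_X, FreeGroup.inv_mk]
  congr 1
  simp [FreeGroup.invRev]

lemma mk_single (ε : Bool) :
    FreeGroup.mk [(false, ε)] = (cond ε (FreeGroup.of false) (FreeGroup.of false)⁻¹) := by
  cases ε
  · rw [show (FreeGroup.of false : FreeGroup Bool) = FreeGroup.mk [(false, true)] from rfl,
      FreeGroup.inv_mk]
    congr 1
  · rfl

lemma Tk_eq (k : ℕ) (ε : Bool) :
    Tk k ε = FreeGroup.of true ^ k * (cond ε (FreeGroup.of false) (FreeGroup.of false)⁻¹) *
      (FreeGroup.of true ^ k)⁻¹ := by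
  rw [Tk, XP, ← FreeGroup.mul_mk, ← FreeGroup.mul_mk, mk_replicate_X, mk_replicate_Xi, mk_single]

lemma Tk_inv (k : ℕ) (ε : Bool) : (Tk k ε)⁻¹ = Tk k (!ε) := by
  rw [Tk_eq, Tk_eq]
  cases ε <;> simp [mul_assoc]

lemma drop_length_takeWhile {α : Type*} (p : α → Bool) (l : List α) :
    l.drop (l.takeWhile p).length = l.dropWhile p := by
  induction l with
  | nil => rfl
  | cons c t ih =>
    by_cases h : p c
    · simp [List.takeWhile_cons, List.dropWhile_cons, h, ih]
    · simp [List.takeWhile_cons, List.dropWhile_cons, h]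

/-- The key cancellation computation: prepending `x⁻ᵏ` to a reduced word. -/
lemma reduce_repl_cancel (w : List (Bool × Bool)) (hw : reduce w = w) (k : ℕ) :
    reduce (List.replicate k lXi ++ w) =
      List.replicate (k - min k (w.takeWhile (fun c => c = lX)).length) lXi ++
        List.drop (min k (w.takeWhile (fun c => c = lX)).length) w := by
  set m := (w.takeWhile (fun c => c = lX)).length with hm
  have hmle : m ≤ w.length := (List.takeWhile_prefix _).length_le
  induction k with
  | zero => simpa using hw
  | succ k ih =>
    rw [List.replicate_succ, List.cons_append, FreeGroup.reduce.cons, ih]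
    rcases lt_or_ge k m with h | h
    · -- the next letter of w is x, and it cancels
      have hmin : min k m = k := min_eq_left (le_of_lt h)
      have hklt : k < w.length := lt_of_lt_of_le h hmle
      have hwk : w[k] = lX := by
        have h1 : (w.takeWhile (fun c => c = lX))[k]'(by omega) = w[k] :=
          (List.takeWhile_prefix _).getElem (by omega)
        have h2 : (w.takeWhile (fun c => c = lX))[k]'(by omega) = lX := by
          have := List.mem_takeWhile_imp (List.getElem_mem (l := w.takeWhile (fun c => c = lX))
            (n := k) (by omega))
          simpa using this
        rw [← h1, h2]
      have hdrop : List.drop k w = lX :: List.drop (k + 1) w := by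
        rw [List.drop_eq_getElem_cons hklt, hwk]
      have hmin' : min (k+1) m = k + 1 := min_eq_left (by omega)
      rw [hmin, hmin', hdrop, Nat.sub_self]
      simp
    · -- no more cancellation
      have hmin : min k m = m := min_eq_right h
      have hmin' : min (k+1) m = m := min_eq_right (by omega)
      rw [hmin, hmin']
      rcases Nat.lt_or_ge m k with h' | h'
      · -- leading x⁻¹ already present
        have e1 : k - m = (k - m - 1) + 1 := by omega
        have e2 : k + 1 - m = (k - m - 1) + 2 := by omega
        rw [e1, e2, List.replicate_succ, List.cons_append]
        dsimp only
        rw [if_neg (by simp)]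
        simp [List.replicate_succ]
      · -- k = m
        have hkm : k = m := le_antisymm h' h
        have e1 : k - m = 0 := by omega
        have e2 : k + 1 - m = 1 := by omega
        rw [e1, e2]
        simp only [List.replicate_zero, List.nil_append]
        have hdw : List.drop m w = List.dropWhile (fun c => c = lX) w := by
          rw [hm]; exact drop_length_takeWhile _ _
        rcases hd : List.drop m w with _ | ⟨d, t⟩
        · simp
        · have h1 : List.dropWhile (fun c => c = lX) w = d :: t := by rw [← hdw, hd]
          have h2 := List.head_dropWhile_not (fun c => c = lX) (l := w) (by rw [h1]; simp)
          have hdne : d ≠ lX := by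
            simp only [h1, List.head_cons] at h2
            simpa using h2
          dsimp only
          rw [if_neg ?_]
          · simp
          · rintro ⟨ha, hb⟩
            apply hdne
            obtain ⟨d1, d2⟩ := d
            simp only at ha hb
            have : d1 = true := ha.symm
            subst this
            have : d2 = true := by
              cases d2
              · exact absurd hb.symm (by simp)
              · rfl
            subst this
            rfl

lemma chain'_XP (k : ℕ) (ε : Bool) : List.Chain' NoCan (XP k ε) := by
  refine chain'_glue (chain'_replicate_self k lX) (List.isChain_singleton _) ?_
  intro x hx y hy
  have hx' := List.eq_of_mem_replicate (List.mem_of_mem_getLast? hx)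
  have hy' : y = (false, ε) := by simpa using List.mem_of_mem_head? hy
  subst hx' hy'
  simp

lemma reduce_XP (k : ℕ) (ε : Bool) : reduce (XP k ε) = XP k ε :=
  reduce_eq_self_of_chain' (chain'_XP k ε)

lemma noCan_false_of_ne {ε : Bool} {y : Bool × Bool} (h : y ≠ (false, !ε)) :
    NoCan (false, ε) y := by
  rintro ⟨h1, h2⟩
  apply h
  obtain ⟨y1, y2⟩ := y
  simp only at h1 h2
  subst h1
  cases ε <;> cases y2 <;> revert h2 <;> decide

/-- The main ping-pong step: multiplying by `Tk k ε` produces the prefix `x^k yᵉ`,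
provided the word does not start with `x^k y⁻ᵉ`. -/
lemma prefix_mul (k : ℕ) (ε : Bool) (g : FreeGroup Bool)
    (hg : ¬ (XP k (!ε) <+: g.toWord)) : XP k ε <+: (Tk k ε * g).toWord := by
  set w := g.toWord with hwdef
  have hw : reduce w = w := FreeGroup.reduce_toWord g
  have hTg : Tk k ε * g = FreeGroup.mk (XP k ε ++ (List.replicate k lXi ++ w)) := by
    rw [Tk, ← FreeGroup.mk_toWord (x := g), FreeGroup.mul_mk, ← hwdef, List.append_assoc]
  have htw : (Tk k ε * g).toWord = reduce (XP k ε ++ (List.replicate k lXi ++ w)) := by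
    rw [hTg, FreeGroup.toWord_mk]
  set m := (w.takeWhile (fun c => c = lX)).length with hm
  set j := min k m with hj
  have hmle : m ≤ w.length := (List.takeWhile_prefix _).length_le
  set r₀ := List.replicate (k - j) lXi ++ List.drop j w with hr₀def
  have hr0 : reduce (List.replicate k lXi ++ w) = r₀ := reduce_repl_cancel w hw k
  have hr₀red : reduce r₀ = r₀ := by rw [← hr0, FreeGroup.reduce.idem]
  -- the head of r₀ is not ` y⁻ᵉ `
  have hne : ∀ y ∈ r₀.head?, y ≠ (false, !ε) := by
    intro y hy heq
    subst heq
    rw [Option.mem_def] at hy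
    rcases Nat.lt_or_ge j k with hlt | hge
    · have e : k - j = (k - j - 1) + 1 := by omega
      rw [hr₀def, e, List.replicate_succ, List.cons_append, List.head?_cons] at hy
      simp at hy
    · have hjk : j = k := le_antisymm (min_le_left _ _) hge
      have hkm : k ≤ m := hjk ▸ (min_le_right k m)
      rw [hr₀def, hjk, Nat.sub_self, List.replicate_zero, List.nil_append] at hy
      rcases Nat.lt_or_ge k m with hlt' | hge'
      · have hklt : k < w.length := lt_of_lt_of_le hlt' hmle
        rw [List.drop_eq_getElem_cons hklt, List.head?_cons] at hy
        have hwk : w[k] = lX := by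
          have h1 : (w.takeWhile (fun c => c = lX))[k]'(by omega) = w[k] :=
            (List.takeWhile_prefix _).getElem (by omega)
          have h2 : (w.takeWhile (fun c => c = lX))[k]'(by omega) = lX := by
            have := List.mem_takeWhile_imp (List.getElem_mem
              (l := w.takeWhile (fun c => c = lX)) (n := k) (by omega))
            simpa using this
          rw [← h1, h2]
        rw [hwk] at hy
        simp at hy
      · have hkm' : k = m := le_antisymm hkm hge'
        rcases hdnil : List.drop k w with _ | ⟨d, t⟩
        · rw [hdnil] at hy; simp at hy
        · rw [hdnil, List.head?_cons] at hy
          have hyd : d = (false, !ε) := by simpa using hy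
          apply hg
          have htake : w.takeWhile (fun c => c = lX) = List.replicate m lX := by
            rw [List.eq_replicate_iff]
            exact ⟨hm.symm, fun b hb => by simpa using List.mem_takeWhile_imp hb⟩
          have hdw : List.drop m w = List.dropWhile (fun c => c = lX) w := by
            rw [hm]; exact drop_length_takeWhile _ _
          have hwsplit : w = List.replicate k lX ++ (d :: t) := by
            conv_lhs => rw [← List.takeWhile_append_dropWhile (p := fun c => c = lX) (l := w)]
            rw [htake, ← hdw, ← hkm', hdnil]
          rw [hwsplit, hyd]
          exact ⟨t, by simp [XP]⟩
  have hchain : List.Chain' NoCan (XP k ε ++ r₀) := by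
    refine List.isChain_append.2 ⟨chain'_XP k ε, chain'_of_reduce_eq_self hr₀red, ?_⟩
    intro x hx y hy
    have hx' : x = (false, ε) := by
      rw [XP, List.getLast?_concat, Option.mem_def, Option.some.injEq] at hx
      exact hx.symm
    subst hx'
    exact noCan_false_of_ne (hne y hy)
  rw [htw, reduce_append, hr0, reduce_eq_self_of_chain' hchain]
  exact ⟨r₀, rfl⟩

/-! ### the ping-pong application -/

/-- The free family `x^(i+1) y x^(-i-1)`. -/
def pp (i : ℕ) : FreeGroup Bool := Tk (i + 1) true

/-- The ping-pong sets -/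
def PS (k : ℕ) (ε : Bool) : Set (FreeGroup Bool) := {g | XP k ε <+: g.toWord}

lemma XP_prefix_unique {k k' : ℕ} {ε ε' : Bool} {L : List (Bool × Bool)}
    (h : XP k ε <+: L) (h' : XP k' ε' <+: L) : k = k' ∧ ε = ε' := by
  have len : ∀ (n : ℕ) (δ : Bool), (XP n δ).length = n + 1 := fun n δ => by simp [XP]
  have getr : ∀ (n : ℕ) (δ : Bool), (XP n δ)[n]'(by rw [len]; omega) = (false, δ) := by
    intro n δ
    simp only [XP]
    rw [List.getElem_append_right (by simp)]
    simp
  have getl : ∀ (n : ℕ) (δ : Bool) (q : ℕ) (hq : q < n),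
      (XP n δ)[q]'(by rw [len]; omega) = lX := by
    intro n δ q hq
    simp only [XP]
    rw [List.getElem_append_left (by simpa using hq)]
    simp
  have key : ∀ (n n' : ℕ) (δ δ' : Bool), XP n δ <+: L → XP n' δ' <+: L → n < n' → False := by
    intro n n' δ δ' hp hp' hlt
    have hn : n < (XP n δ).length := by rw [len]; omega
    have hn' : n < (XP n' δ').length := by rw [len]; omega
    have e1 : L[n]'(lt_of_lt_of_le hn hp.length_le) = (false, δ) := by
      rw [← hp.getElem hn]; exact getr n δ
    have e2 : L[n]'(lt_of_lt_of_le hn hp.length_le) = lX := by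
      rw [← hp'.getElem hn']; exact getl n' δ' n hlt
    rw [e1] at e2
    simp at e2
  have hkk' : k = k' := by
    by_contra hne
    rcases Nat.lt_or_ge k k' with hlt | hge
    · exact key k k' ε ε' h h' hlt
    · exact key k' k ε' ε h' h (by omega)
  subst hkk'
  refine ⟨rfl, ?_⟩
  have hk : k < (XP k ε).length := by rw [len]; omega
  have e1 : L[k]'(lt_of_lt_of_le hk h.length_le) = (false, ε) := by
    rw [← h.getElem hk]; exact getr k ε
  have e2 : L[k]'(lt_of_lt_of_le hk h.length_le) = (false, ε') := by
    rw [← h'.getElem (by rw [len]; omega)]; exact getr k ε'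
  rw [e1] at e2
  simpa using e2

lemma PS_disjoint {k k' : ℕ} {ε ε' : Bool} (h : k ≠ k' ∨ ε ≠ ε') :
    Disjoint (PS k ε) (PS k' ε') := by
  rw [Set.disjoint_left]
  intro g hg hg'
  obtain ⟨h1, h2⟩ := XP_prefix_unique hg hg'
  rcases h with h | h
  · exact h h1
  · exact h h2

lemma pp_injective : Function.Injective (FreeGroup.lift pp) := by
  refine FreeGroup.injective_lift_of_ping_pong pp (fun i => PS (i + 1) true)
    (fun i => PS (i + 1) false) ?_ ?_ ?_ ?_ ?_ ?_
  · intro i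
    refine ⟨FreeGroup.mk (XP (i + 1) true), ?_⟩
    show XP (i + 1) true <+: (FreeGroup.mk (XP (i + 1) true)).toWord
    rw [FreeGroup.toWord_mk, reduce_XP]
  · intro i j hij
    exact PS_disjoint (Or.inl (by omega))
  · intro i j hij
    exact PS_disjoint (Or.inl (by omega))
  · intro i j
    exact PS_disjoint (Or.inr (by simp))
  · intro i z hz
    rw [Set.mem_smul_set] at hz
    obtain ⟨g, hg, rfl⟩ := hz
    rw [smul_eq_mul]
    show XP (i + 1) true <+: (Tk (i + 1) true * g).toWord
    exact prefix_mul (i + 1) true g (by simpa [PS] using hg)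
  · intro i z hz
    rw [Set.mem_smul_set] at hz
    obtain ⟨g, hg, rfl⟩ := hz
    rw [smul_eq_mul]
    have hinv : (pp)⁻¹ i = Tk (i + 1) false := by
      show (pp i)⁻¹ = _
      rw [pp, Tk_inv]
      rfl
    rw [hinv]
    show XP (i + 1) false <+: (Tk (i + 1) false * g).toWord
    exact prefix_mul (i + 1) false g (by simpa [PS] using hg)

/-! ### combination of several identities into one -/

/-- inclusion of the free group on two generators into the free group with extra letters -/
noncomputable def iota : FreeGroup Bool →* FreeGroup (Bool ⊕ ℕ) := FreeGroup.map Sum.inl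

lemma toWord_iota (v : FreeGroup Bool) :
    (iota v).toWord = v.toWord.map fun c => (Sum.inl c.1, c.2) := by
  have h1 : iota v = FreeGroup.mk (v.toWord.map fun c => (Sum.inl c.1, c.2)) := by
    rw [iota, ← FreeGroup.mk_toWord (x := v), FreeGroup.map.mk]
    rw [FreeGroup.mk_toWord]
  rw [h1, FreeGroup.toWord_mk, reduce_map Sum.inl_injective, FreeGroup.reduce_toWord]

open scoped commutatorElement

/-- The iterated commutator word with fresh conjugating letters. -/
noncomputable def comb : ℕ → FreeGroup Bool → List (FreeGroup Bool) → FreeGroup (Bool ⊕ ℕ)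
  | _, v, [] => iota v
  | p, v, v' :: vs =>
    ⁅FreeGroup.of (Sum.inr p) * iota v * (FreeGroup.of (Sum.inr p))⁻¹, comb (p + 1) v' vs⁆

lemma comb_collapse {H : Type*} [Group H] (ψ : FreeGroup (Bool ⊕ ℕ) →* H) :
    ∀ (vs : List (FreeGroup Bool)) (p : ℕ) (v : FreeGroup Bool),
      (ψ (iota v) = 1 ∨ ∃ v' ∈ vs, ψ (iota v') = 1) → ψ (comb p v vs) = 1 := by
  intro vs
  induction vs with
  | nil =>
    intro p v h
    rcases h with h | ⟨v', hv', _⟩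
    · exact h
    · simp at hv'
  | cons v' vs ih =>
    intro p v h
    rw [comb, map_commutatorElement]
    rcases h with h | ⟨v'', hv'', hval⟩
    · have : ψ (of (Sum.inr p) * iota v * (of (Sum.inr p))⁻¹) = 1 := by
        rw [_root_.map_mul, _root_.map_mul, h, mul_one, _root_.map_inv, mul_inv_cancel]
      rw [this]
      exact commutatorElement_one_left _
    · rcases List.mem_cons.1 hv'' with rfl | hmem
      · rw [ih (p + 1) v'' (Or.inl hval)]
        exact commutatorElement_one_right _
      · rw [ih (p + 1) v' (Or.inr ⟨v'', hmem, hval⟩)]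
        exact commutatorElement_one_right _

lemma comb_spec :
    ∀ (vs : List (FreeGroup Bool)) (p : ℕ) (v : FreeGroup Bool), v ≠ 1 → (∀ u ∈ vs, u ≠ 1) →
      (comb p v vs).toWord ≠ [] ∧
        ∀ c ∈ (comb p v vs).toWord, ∀ q : ℕ, c.1 = Sum.inr q → p ≤ q := by
  intro vs
  induction vs with
  | nil =>
    intro p v hv _
    rw [comb, toWord_iota]
    constructor
    · simp [FreeGroup.toWord_eq_nil_iff, hv]
    · intro c hc q hq
      simp only [List.mem_map] at hc
      obtain ⟨d, _, rfl⟩ := hc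
      simp at hq
  | cons v' vs ih =>
    intro p v hv hvs
    have hv' : v' ≠ 1 := hvs v' (by simp)
    have hvs' : ∀ u ∈ vs, u ≠ 1 := fun u hu => hvs u (by simp [hu])
    obtain ⟨hBne, hBlet⟩ := ih (p + 1) v' hv' hvs'
    set B := comb (p + 1) v' vs with hB
    set LA : List ((Bool ⊕ ℕ) × Bool) :=
      v.toWord.map (fun c => ((Sum.inl c.1 : Bool ⊕ ℕ), c.2)) with hLA
    set LB := B.toWord with hLB
    have hLAne : LA ≠ [] := by
      rw [hLA]
      simp [List.map_eq_nil_iff, FreeGroup.toWord_eq_nil_iff, hv]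
    have hLBne : LB ≠ [] := hBne
    have hLAred : reduce LA = LA := by
      rw [hLA, reduce_map Sum.inl_injective, FreeGroup.reduce_toWord]
    have hLBred : reduce LB = LB := FreeGroup.reduce_toWord B
    have hLAfst : ∀ c ∈ LA, c.1 ≠ (Sum.inr p : Bool ⊕ ℕ) := by
      intro c hc
      rw [hLA] at hc
      simp only [List.mem_map] at hc
      obtain ⟨d, _, rfl⟩ := hc
      simp
    have hLBfst : ∀ c ∈ LB, c.1 ≠ (Sum.inr p : Bool ⊕ ℕ) := by
      intro c hc heq
      have := hBlet c hc p heq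
      omega
    have hIAfst : ∀ c ∈ invRev LA, c.1 ≠ (Sum.inr p : Bool ⊕ ℕ) := by
      intro c hc
      obtain ⟨d, hd, he⟩ := mem_invRev hc
      rw [he]
      exact hLAfst d hd
    have hIBfst : ∀ c ∈ invRev LB, c.1 ≠ (Sum.inr p : Bool ⊕ ℕ) := by
      intro c hc
      obtain ⟨d, hd, he⟩ := mem_invRev hc
      rw [he]
      exact hLBfst d hd
    set ζt : (Bool ⊕ ℕ) × Bool := (Sum.inr p, true) with hζt
    set ζf : (Bool ⊕ ℕ) × Bool := (Sum.inr p, false) with hζf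
    set M := ζt :: (LA ++ ζf :: (LB ++ ζt :: (invRev LA ++ ζf :: invRev LB))) with hM
    have h1 : FreeGroup.of (Sum.inr p : Bool ⊕ ℕ) = FreeGroup.mk [ζt] := rfl
    have h2 : (FreeGroup.of (Sum.inr p : Bool ⊕ ℕ))⁻¹ = FreeGroup.mk [ζf] := by
      rw [h1, FreeGroup.inv_mk]
      simp [FreeGroup.invRev, hζt, hζf]
    have h3 : iota v = FreeGroup.mk LA := by
      rw [← FreeGroup.mk_toWord (x := iota v), toWord_iota]
    have h4 : (iota v)⁻¹ = FreeGroup.mk (invRev LA) := by rw [h3, FreeGroup.inv_mk]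
    have h5 : B = FreeGroup.mk LB := (FreeGroup.mk_toWord).symm
    have h6 : B⁻¹ = FreeGroup.mk (invRev LB) := by rw [h5, FreeGroup.inv_mk]
    have hcomb : comb p v (v' :: vs) = FreeGroup.mk M := by
      rw [comb, commutatorElement_def, ← hB]
      simp only [mul_inv_rev, inv_inv]
      rw [h2, h4, h6, h1, h3, h5]
      simp only [FreeGroup.mul_mk]
      rw [hM]
      simp [List.append_assoc]
    have C8 : List.Chain' NoCan (invRev LB) := chain'_invRev hLBred
    have C7 : List.Chain' NoCan (ζf :: invRev LB) :=
      chain'_cons_ne C8 fun y hy => Ne.symm (hIBfst y (List.mem_of_mem_head? hy))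
    have C6 : List.Chain' NoCan (invRev LA ++ ζf :: invRev LB) := by
      refine chain'_glue (chain'_invRev hLAred) C7 fun x hx y hy => ?_
      have hy' : y = ζf := by simpa using hy.symm
      rw [hy']
      exact hIAfst x (List.mem_of_mem_getLast? hx)
    have C5 : List.Chain' NoCan (ζt :: (invRev LA ++ ζf :: invRev LB)) :=
      chain'_cons_ne C6 fun y hy =>
        Ne.symm (hIAfst y (head?_mem_append (invRev_ne_nil hLAne) hy))
    have C4 : List.Chain' NoCan (LB ++ ζt :: (invRev LA ++ ζf :: invRev LB)) := by
      refine chain'_glue (chain'_of_reduce_eq_self hLBred) C5 fun x hx y hy => ?_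
      have hy' : y = ζt := by simpa using hy.symm
      rw [hy']
      exact hLBfst x (List.mem_of_mem_getLast? hx)
    have C3 : List.Chain' NoCan (ζf :: (LB ++ ζt :: (invRev LA ++ ζf :: invRev LB))) :=
      chain'_cons_ne C4 fun y hy => Ne.symm (hLBfst y (head?_mem_append hLBne hy))
    have C2 : List.Chain' NoCan (LA ++ ζf :: (LB ++ ζt :: (invRev LA ++ ζf :: invRev LB))) := by
      refine chain'_glue (chain'_of_reduce_eq_self hLAred) C3 fun x hx y hy => ?_
      have hy' : y = ζf := by simpa using hy.symm
      rw [hy']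
      exact hLAfst x (List.mem_of_mem_getLast? hx)
    have hchain : List.Chain' NoCan M :=
      chain'_cons_ne C2 fun y hy => Ne.symm (hLAfst y (head?_mem_append hLAne hy))
    have htoword : (comb p v (v' :: vs)).toWord = M := by
      rw [hcomb, FreeGroup.toWord_mk, reduce_eq_self_of_chain' hchain]
    constructor
    · rw [htoword, hM]
      simp
    · rw [htoword]
      intro c hc q hq
      rw [hM] at hc
      simp only [List.mem_cons, List.mem_append] at hc
      have hζtc : c = ζt → p ≤ q := by
        rintro rfl
        rw [hζt] at hq
        simp only [Sum.inr.injEq] at hq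
        omega
      have hζfc : c = ζf → p ≤ q := by
        rintro rfl
        rw [hζf] at hq
        simp only [Sum.inr.injEq] at hq
        omega
      have hinlA : c ∈ LA → p ≤ q := by
        intro hc'
        exact absurd hq (by
          rw [hLA] at hc'
          simp only [List.mem_map] at hc'
          obtain ⟨d, _, rfl⟩ := hc'
          simp)
      have hinLB : c ∈ LB → p ≤ q := fun hc' => by
        have := hBlet c hc' q hq
        omega
      have hinIA : c ∈ invRev LA → p ≤ q := by
        intro hc'
        obtain ⟨d, hd, he⟩ := mem_invRev hc'
        exact absurd hq (by
          rw [hLA] at hd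
          simp only [List.mem_map] at hd
          obtain ⟨d', _, rfl⟩ := hd
          rw [he]
          simp)
      have hinIB : c ∈ invRev LB → p ≤ q := by
        intro hc'
        obtain ⟨d, hd, he⟩ := mem_invRev hc'
        have := hBlet d hd q (he ▸ hq)
        omega
      rcases hc with rfl | hc'
      · exact hζtc rfl
      rcases hc' with hc' | hc'
      · exact hinlA hc'
      rcases hc' with rfl | hc'
      · exact hζfc rfl
      rcases hc' with hc' | hc'
      · exact hinLB hc'
      rcases hc' with rfl | hc'
      · exact hζtc rfl
      rcases hc' with hc' | hc'
      · exact hinIA hc'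
      rcases hc' with rfl | hc'
      · exact hζfc rfl
      · exact hinIB hc'

/-- Combination: a finite disjunction of identities yields a single nontrivial word
vanishing identically. -/
lemma exists_identity_word {G : Type*} [Group G] (l : List (FreeGroup Bool))
    (hl : l ≠ []) (hnt : ∀ v ∈ l, v ≠ 1)
    (hdisj : ∀ a b : G, ∃ v ∈ l, FreeGroup.lift (fun x => if x then a else b) v = 1) :
    ∃ w : FreeGroup Bool, w ≠ 1 ∧
      ∀ a b : G, FreeGroup.lift (fun x => if x then a else b) w = 1 := by
  classical
  obtain ⟨v₀, vs, rfl⟩ := List.exists_cons_of_ne_nil hl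
  have hd : Denumerable (Bool ⊕ ℕ) := (nonempty_denumerable _).some
  set e : Bool ⊕ ℕ ≃ ℕ := @Denumerable.eqv (Bool ⊕ ℕ) hd with he
  set Ψ : FreeGroup (Bool ⊕ ℕ) →* FreeGroup Bool :=
    (FreeGroup.lift pp).comp (freeGroupCongr e).toMonoidHom with hΨ
  have hΨinj : Function.Injective Ψ := by
    rw [hΨ, MonoidHom.coe_comp]
    exact pp_injective.comp (freeGroupCongr e).injective
  have hv₀ : v₀ ≠ 1 := hnt v₀ (by simp)
  have hvs : ∀ u ∈ vs, u ≠ 1 := fun u hu => hnt u (by simp [hu])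
  obtain ⟨hne, _⟩ := comb_spec vs 0 v₀ hv₀ hvs
  refine ⟨Ψ (comb 0 v₀ vs), ?_, ?_⟩
  · intro h
    apply hne
    have : comb 0 v₀ vs = 1 := hΨinj (by simpa using h)
    rw [this]
    exact FreeGroup.toWord_one
  · intro a b
    set φ : FreeGroup Bool →* G := FreeGroup.lift (fun x => if x then a else b) with hφ
    set ψ : FreeGroup (Bool ⊕ ℕ) →* G := φ.comp Ψ with hψ
    have key : ∀ v : FreeGroup Bool,
        ψ (iota v) = FreeGroup.lift
          (fun x => if x then ψ (iota (FreeGroup.of true)) else ψ (iota (FreeGroup.of false))) v := by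
      intro v
      have : ψ.comp iota = FreeGroup.lift
          (fun x => if x then ψ (iota (FreeGroup.of true)) else ψ (iota (FreeGroup.of false))) := by
        apply FreeGroup.ext_hom
        intro c
        cases c <;> simp [FreeGroup.lift_apply_of]
      calc ψ (iota v) = (ψ.comp iota) v := rfl
        _ = _ := by rw [this]
    obtain ⟨v, hvmem, hval⟩ :=
      hdisj (ψ (iota (FreeGroup.of true))) (ψ (iota (FreeGroup.of false)))
    have hcol : ψ (comb 0 v₀ vs) = 1 := by
      apply comb_collapse
      rcases List.mem_cons.1 hvmem with rfl | hmem
      · exact Or.inl (by rw [key]; exact hval)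
      · exact Or.inr ⟨v, hmem, by rw [key]; exact hval⟩
    show φ (Ψ (comb 0 v₀ vs)) = 1
    exact hcol

end AlephAux

namespace AlephAux

open FirstOrder Language

/-- the multiplication symbol -/
def mulS : GroupLang.Functions 2 := Unit.unit
/-- the inversion symbol -/
def invS : GroupLang.Functions 1 := Unit.unit
/-- the identity symbol -/
def oneS : GroupLang.Constants := Unit.unit

variable {G : Type*} [Group G]

@[simp] lemma funMap_mulS (x : Fin 2 → G) :
    Structure.funMap (L := GroupLang) mulS x = x 0 * x 1 := rfl

@[simp] lemma funMap_invS (x : Fin 1 → G) :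
    Structure.funMap (L := GroupLang) invS x = (x 0)⁻¹ := rfl

@[simp] lemma funMap_oneS (x : Fin 0 → G) :
    Structure.funMap (L := GroupLang) oneS x = 1 := rfl

@[simp] lemma constantMap_oneS : ((oneS : GroupLang.Constants) : G) = 1 := rfl

/-- evaluation of a word (given as a list of letters) at a pair of group elements -/
def weval (a b : G) (L : List (Bool × Bool)) : G :=
  (L.map fun c => cond c.2 (cond c.1 a b) (cond c.1 a b)⁻¹).prod

@[simp] lemma weval_nil (a b : G) : weval a b [] = 1 := rfl

lemma weval_cons (a b : G) (c : Bool × Bool) (L : List (Bool × Bool)) :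
    weval a b (c :: L) = (cond c.2 (cond c.1 a b) (cond c.1 a b)⁻¹) * weval a b L := by
  simp [weval]

lemma weval_toWord (a b : G) (w : FreeGroup Bool) :
    weval a b w.toWord = FreeGroup.lift (fun x => if x then a else b) w := by
  conv_rhs => rw [← FreeGroup.mk_toWord (x := w)]
  rw [FreeGroup.lift_mk, weval]
  congr 1
  apply List.map_congr_left
  intro c _
  cases hc1 : c.1 <;> cases hc2 : c.2 <;> simp

lemma weval_posWord (a b : G) (w : List Bool) :
    weval a b (w.map fun x => (x, true)) = posWordEval a b w := by
  rw [weval, posWordEval, List.map_map]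
  congr 1
  apply List.map_congr_left
  intro c _
  cases c <;> simp

/-- the term corresponding to a word, with designated variables for the two letters -/
def wordTerm {α : Type*} (va vb : α) : List (Bool × Bool) → GroupLang.Term α
  | [] => oneS.term
  | c :: L =>
    mulS.apply₂
      (cond c.2 (Term.var (cond c.1 va vb)) (invS.apply₁ (Term.var (cond c.1 va vb))))
      (wordTerm va vb L)

lemma realize_wordTerm {α : Type*} (env : α → G) (va vb : α) (L : List (Bool × Bool)) :
    (wordTerm va vb L).realize env = weval (env va) (env vb) L := by
  induction L with
  | nil =>
    rw [wordTerm, weval_nil]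
    simp [Term.realize_constants]
  | cons c L ih =>
    obtain ⟨c1, c2⟩ := c
    rw [wordTerm, weval_cons, Term.realize_functions_apply₂, ih]
    cases c2 <;> cases c1 <;> simp [Term.realize_functions_apply₁]

/-! ### the two-step saturation argument -/

/-- inequality of two word terms, as a bounded formula with one free and one bound variable -/
def ineqBF (T S : ℕ → List (Bool × Bool)) (n : ℕ) : GroupLang.BoundedFormula (Fin 0 ⊕ Fin 1) 1 :=
  ((wordTerm (Sum.inl (Sum.inr 0)) (Sum.inr 0) (T n)).bdEqual
    (wordTerm (Sum.inl (Sum.inr 0)) (Sum.inr 0) (S n))).not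

/-- finite conjunctions of the inequalities -/
def conjBF (T S : ℕ → List (Bool × Bool)) : ℕ → GroupLang.BoundedFormula (Fin 0 ⊕ Fin 1) 1
  | 0 => ineqBF T S 0
  | n + 1 => conjBF T S n ⊓ ineqBF T S (n + 1)

lemma realize_ineqBF {T S : ℕ → List (Bool × Bool)} {n : ℕ} {v : Fin 0 ⊕ Fin 1 → G}
    {xs : Fin 1 → G} :
    (ineqBF T S n).Realize v xs ↔
      weval (v (Sum.inr 0)) (xs 0) (T n) ≠ weval (v (Sum.inr 0)) (xs 0) (S n) := by
  rw [ineqBF, BoundedFormula.realize_not, BoundedFormula.realize_bdEqual,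
    realize_wordTerm, realize_wordTerm]
  rfl

lemma realize_conjBF {T S : ℕ → List (Bool × Bool)} {v : Fin 0 ⊕ Fin 1 → G}
    {xs : Fin 1 → G} (n : ℕ) :
    (conjBF T S n).Realize v xs ↔
      ∀ m ≤ n, weval (v (Sum.inr 0)) (xs 0) (T m) ≠ weval (v (Sum.inr 0)) (xs 0) (S m) := by
  induction n with
  | zero =>
    rw [conjBF, realize_ineqBF]
    simp
  | succ n ih =>
    rw [conjBF, BoundedFormula.realize_inf, ih, realize_ineqBF]
    constructor
    · rintro ⟨h1, h2⟩ m hm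
      rcases Nat.le_succ_iff.1 hm with hm' | hm'
      · exact h1 m hm'
      · rw [hm']; exact h2
    · intro h
      exact ⟨fun m hm => h m (le_trans hm (Nat.le_succ n)), h (n + 1) le_rfl⟩

lemma realize_exForm {T S : ℕ → List (Bool × Bool)} (v : Fin 0 ⊕ Fin 1 → G) (n : ℕ) :
    Formula.Realize (L := GroupLang) ((conjBF T S n).ex) v ↔
      ∃ b : G, ∀ m ≤ n,
        weval (v (Sum.inr 0)) b (T m) ≠ weval (v (Sum.inr 0)) b (S m) := by
  have h0 : Formula.Realize (L := GroupLang) ((conjBF T S n).ex) v ↔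
      ∃ b : G, (conjBF T S n).Realize v (Fin.snoc default b) := BoundedFormula.realize_ex
  rw [h0]
  refine exists_congr fun b => ?_
  have hsnoc : (Fin.snoc (default : Fin 0 → G) b : Fin 1 → G) 0 = b := by
    simp [Fin.snoc]
  rw [realize_conjBF, hsnoc]

/-- inequality of two word terms as a formula in one free variable with one parameter -/
def ineqF (T S : ℕ → List (Bool × Bool)) (n : ℕ) : GroupLang.Formula (Fin 1 ⊕ Fin 1) :=
  ((wordTerm (Sum.inl 0) (Sum.inr 0) (T n)).equal
    (wordTerm (Sum.inl 0) (Sum.inr 0) (S n))).not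

lemma realize_ineqF {T S : ℕ → List (Bool × Bool)} {n : ℕ} {v : Fin 1 ⊕ Fin 1 → G} :
    (ineqF T S n).Realize v ↔
      weval (v (Sum.inl 0)) (v (Sum.inr 0)) (T n) ≠ weval (v (Sum.inl 0)) (v (Sum.inr 0)) (S n) := by
  rw [ineqF, Formula.realize_not, Formula.realize_equal, realize_wordTerm, realize_wordTerm]

/-- The two-step saturation argument: a countable family of inequational conditions in two
variables which is finitely satisfiable is realized. -/
lemma sat_pair (hsat : AlephZeroSaturated G) (T S : ℕ → List (Bool × Bool))
    (hfs : ∀ s : Finset ℕ, ∃ a b : G, ∀ n ∈ s, weval a b (T n) ≠ weval a b (S n)) :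
    ∃ a b : G, ∀ n, weval a b (T n) ≠ weval a b (S n) := by
  obtain ⟨a, ha⟩ := hsat 0 (fun i => i.elim0) (fun n => (conjBF T S n).ex) (by
    intro s
    obtain ⟨a, b, hab⟩ := hfs (Finset.range ((s.sup id) + 1))
    refine ⟨a, fun n hn => ?_⟩
    rw [realize_exForm]
    refine ⟨b, fun m hm => ?_⟩
    have hmem : m ∈ Finset.range ((s.sup id) + 1) := by
      rw [Finset.mem_range]
      have := Finset.le_sup (f := id) hn
      simp only [id] at this
      omega
    exact hab m hmem)
  have H1 : ∀ n, ∃ b : G, ∀ m ≤ n, weval a b (T m) ≠ weval a b (S m) := by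
    intro n
    have := ha n
    rw [realize_exForm] at this
    exact this
  obtain ⟨b, hb⟩ := hsat 1 (fun _ => a) (ineqF T S) (by
    intro s
    obtain ⟨b, hbs⟩ := H1 (s.sup id)
    refine ⟨b, fun n hn => ?_⟩
    rw [realize_ineqF]
    exact hbs n (by simpa using Finset.le_sup (f := id) hn))
  refine ⟨a, b, fun n => ?_⟩
  have := hb n
  rw [realize_ineqF] at this
  exact this

end AlephAux


namespace AlephAux

instance : Countable (FreeGroup Bool) := FreeGroup.toWord_injective.countable

lemma exists_nat_surj (α : Type*) [Countable α] [Nonempty α] :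
    ∃ f : ℕ → α, Function.Surjective f := by
  obtain ⟨g, hg⟩ := exists_injective_nat α
  obtain ⟨f, hf⟩ := hg.hasLeftInverse
  exact ⟨f, hf.surjective⟩

end AlephAux

/-- In an ℵ₀-saturated group `G`, either `G` contains a free subgroup of rank 2 or `G`
satisfies a nontrivial identity in two variables; and in the latter case, either `G`
contains a free subsemigroup of rank 2 or `G` satisfies a finite disjunction of nontrivial
positive identities in two variables. -/
theorem aleph0_saturated_dichotomy (G : Type*) [Group G]
    (hsat : AlephZeroSaturated G) :
    (ContainsFreeGroupRank2 G ∨ SatisfiesNontrivialIdentity G) ∧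
      (SatisfiesNontrivialIdentity G →
        ContainsFreeSubsemigroupRank2 G ∨
          ∃ (k : ℕ) (t s : Fin k → List Bool), (∀ i, t i ≠ s i) ∧
            ∀ a b : G, ∃ i, posWordEval a b (t i) = posWordEval a b (s i)) := by
  classical
  constructor
  · -- free subgroup or identity
    by_cases hSNI : SatisfiesNontrivialIdentity G
    · exact Or.inr hSNI
    · refine Or.inl ?_
      have hnonempty : Nonempty {w : FreeGroup Bool // w ≠ 1} :=
        ⟨⟨FreeGroup.of true, FreeGroup.of_ne_one true⟩⟩
      obtain ⟨e, he⟩ := AlephAux.exists_nat_surj {w : FreeGroup Bool // w ≠ 1}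
      obtain ⟨a, b, hab⟩ := AlephAux.sat_pair hsat (fun n => (e n).1.toWord)
        (fun _ => ([] : List (Bool × Bool))) (by
          intro s
          by_contra hcon
          push_neg at hcon
          apply hSNI
          have hlne : s.toList.map (fun n => (e n).1) ≠ [] := by
            obtain ⟨n, hn, -⟩ := hcon 1 1
            intro hnil
            rw [List.map_eq_nil_iff] at hnil
            exact absurd (Finset.mem_toList.2 hn) (by rw [hnil]; simp)
          refine AlephAux.exists_identity_word (s.toList.map fun n => (e n).1) hlne ?_ ?_
          · intro v hv
            simp only [List.mem_map] at hv
            obtain ⟨n, -, rfl⟩ := hv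
            exact (e n).2
          · intro x y
            obtain ⟨n, hn, hval⟩ := hcon x y
            refine ⟨(e n).1, List.mem_map.2 ⟨n, Finset.mem_toList.2 hn, rfl⟩, ?_⟩
            rw [← AlephAux.weval_toWord]
            simpa using hval)
      refine ⟨FreeGroup.lift (fun x => if x then a else b), ?_⟩
      rw [injective_iff_map_eq_one]
      intro w hw
      by_contra hwne
      obtain ⟨n, hn⟩ := he ⟨w, hwne⟩
      have h := hab n
      rw [hn] at h
      apply h
      rw [AlephAux.weval_toWord, hw]
      simp
  · -- free subsemigroup or finite disjunction of positive identities
    intro _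
    by_cases hfin : ∃ (k : ℕ) (t s : Fin k → List Bool), (∀ i, t i ≠ s i) ∧
        ∀ a b : G, ∃ i, posWordEval a b (t i) = posWordEval a b (s i)
    · exact Or.inr hfin
    · refine Or.inl ?_
      push_neg at hfin
      have hnonempty :
          Nonempty {q : List Bool × List Bool // q.1 ≠ [] ∧ q.2 ≠ [] ∧ q.1 ≠ q.2} :=
        ⟨⟨([true], [false]), by simp⟩⟩
      obtain ⟨e, he⟩ :=
        AlephAux.exists_nat_surj {q : List Bool × List Bool // q.1 ≠ [] ∧ q.2 ≠ [] ∧ q.1 ≠ q.2}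
      obtain ⟨a, b, hab⟩ := AlephAux.sat_pair hsat
        (fun n => ((e n).1.1.map fun x => (x, true)))
        (fun n => ((e n).1.2.map fun x => (x, true))) (by
          intro s
          obtain ⟨a, b, hab⟩ := hfin s.toList.length
            (fun i => (e (s.toList.get i)).1.1)
            (fun i => (e (s.toList.get i)).1.2)
            (fun i => (e (s.toList.get i)).2.2.2)
          refine ⟨a, b, fun n hn => ?_⟩
          obtain ⟨i, hi⟩ := List.mem_iff_get.1 (Finset.mem_toList.2 hn)
          have h := hab i
          rw [hi] at h
          intro hcon
          apply h
          have h1 := AlephAux.weval_posWord a b (e n).1.1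
          have h2 := AlephAux.weval_posWord a b (e n).1.2
          rw [← h1, ← h2]
          exact hcon)
      refine ⟨a, b, fun w₁ w₂ h1 h2 h12 hcon => ?_⟩
      obtain ⟨n, hn⟩ := he ⟨(w₁, w₂), h1, h2, h12⟩
      have h := hab n
      rw [hn] at h
      apply h
      rw [AlephAux.weval_posWord, AlephAux.weval_posWord]
      exact hcon
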